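/- Every decorated tree that contains an internal node other than the root has at least one free leaf; moreover, in a decorated tree whose only internal node is the root, all leaves are free leaves. -/
import Mathlib


/-- Rooted plane trees with integer labels on the leaves. -/
inductive DTree where
  | leaf : ℤ → DTree
  | node : List DTree → DTree

mutual
/-- The list of leaf labels of a tree, in left-to-right (prefix traversal) order. -/
def leafLabels : DTree → List ℤ
  | .leaf l => [l]
  | .node ts => leafLabelsList ts
def leafLabelsList : List DTree → List ℤ
  | [] => []
  | t :: ts => leafLabels t ++ leafLabelsList ts
end

/-- The three conditions of decorated trees, for a subtree whose root is at depth `d`: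
leaf labels are at least -1 and strictly less than the depth of their parent;
every internal node of positive depth `d` has a descendant leaf labeled at most `d - 2`;
and in any direct subtree of an internal node of depth `d`, a leaf labeled `d` is
preceded in traversal order only by leaves labeled at least `d`. -/
inductive DecoAt : DTree → ℕ → Prop where
  | leaf {l : ℤ} {d : ℕ} (h1 : -1 ≤ l) (h2 : l < (d : ℤ) - 1) : DecoAt (.leaf l) d
  | node {ts : List DTree} {d : ℕ} (hne : ts ≠ [])
      (h2 : 0 < d → ∃ x ∈ leafLabelsList ts, x ≤ (d : ℤ) - 2)
      (h3 : ∀ t' ∈ ts, ∀ a b, leafLabels t' = a ++ (d : ℤ) :: b → ∀ x ∈ a, (d : ℤ) ≤ x)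
      (h4 : ∀ t' ∈ ts, DecoAt t' (d + 1)) : DecoAt (.node ts) d

/-- A decorated tree: the root is at depth 0. -/
def IsDeco (T : DTree) : Prop := DecoAt T 0

/-- The number of free leaves (leaves labeled -1). -/
def fl (T : DTree) : ℕ := (leafLabels T).count (-1)

mutual
/-- Increment leaf labels, where the counter `m` is the number of free leaves (from
the left) that still must be incremented; once it reaches 0, remaining free leaves
are left untouched. Returns the new tree and the remaining counter. -/
def incUpTo : DTree → ℕ → DTree × ℕ
  | .leaf l, m =>
      if l = -1 then (if 0 < m then (.leaf 0, m - 1) else (.leaf (-1), m))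
      else (.leaf (l + 1), m)
  | .node ts, m =>
      let p := incList ts m
      (.node p.1, p.2)
def incList : List DTree → ℕ → List DTree × ℕ
  | [], m => ([], m)
  | t :: ts, m =>
      let p := incUpTo t m
      let q := incList ts p.2
      (p.1 :: q.1, q.2)
end

/-- Δ_T(T,i): attach `T` under a new root vertex and add 1 to every leaf label,
except for the last `i` free leaves (in traversal order). -/
def deltaT (T : DTree) (i : ℕ) : DTree := .node [(incUpTo T (fl T - i)).1]

mutual
/-- Subtract 1 from every non-free leaf label. -/
def decLeaves : DTree → DTree
  | .leaf l => if l = -1 then .leaf (-1) else .leaf (l - 1)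
  | .node ts => .node (decList ts)
def decList : List DTree → List DTree
  | [] => []
  | t :: ts => decLeaves t :: decList ts
end

/-- Π_T: remove the root (which has a unique child) and subtract 1 from every
non-free leaf label. -/
def piT : DTree → DTree
  | .node [t] => decLeaves t
  | t => t


lemma mem_leafLabelsList {x : ℤ} {ts : List DTree} :
    x ∈ leafLabelsList ts ↔ ∃ t ∈ ts, x ∈ leafLabels t := by
  induction ts with
  | nil => simp [leafLabelsList]
  | cons t ts ih => simp [leafLabelsList, ih]

lemma labels_ge {t : DTree} {d : ℕ} (h : DecoAt t d) :
    ∀ x ∈ leafLabels t, -1 ≤ x := by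
  induction h with
  | leaf h1 h2 => simp [leafLabels]; exact h1
  | node hne h2 h3 h4 ih =>
      intro x hx
      rw [leafLabels, mem_leafLabelsList] at hx
      obtain ⟨t', ht', hxt⟩ := hx
      exact ih t' ht' x hxt

theorem stmt5 (ts : List DTree) (h : IsDeco (.node ts)) :
    ((¬ ∀ t ∈ ts, ∃ l, t = DTree.leaf l) → 0 < fl (.node ts)) ∧
    ((∀ t ∈ ts, ∃ l, t = DTree.leaf l) → ∀ x ∈ leafLabels (.node ts), x = -1) := by
  rcases h with _ | ⟨hne, h2, h3, h4⟩
  constructor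
  · intro hn
    push_neg at hn
    obtain ⟨t, ht, hnl⟩ := hn
    obtain hcase : ∃ ts', t = DTree.node ts' := by
      cases t with
      | leaf l => exact absurd rfl (hnl l)
      | node ts' => exact ⟨ts', rfl⟩
    obtain ⟨ts', rfl⟩ := hcase
    have hd := h4 _ ht
    have hge := labels_ge hd
    rcases hd with _ | ⟨hne', h2', h3', h4'⟩
    obtain ⟨x, hx, hxle⟩ := h2' (by norm_num)
    have hxge := hge x (by rw [leafLabels]; exact hx)
    have hx1 : x = -1 := by omega
    have hmem : (-1 : ℤ) ∈ leafLabels (DTree.node ts) := by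
      rw [leafLabels, mem_leafLabelsList]
      exact ⟨_, ht, by rw [leafLabels]; exact hx1 ▸ hx⟩
    exact List.count_pos_iff.mpr hmem
  · intro hall x hx
    rw [leafLabels, mem_leafLabelsList] at hx
    obtain ⟨t, ht, hxt⟩ := hx
    obtain ⟨l, rfl⟩ := hall t ht
    have hd := h4 _ ht
    rcases hd with ⟨h1, hlt⟩ | _
    simp [leafLabels] at hxt
    subst hxt
    omega
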